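/- Let U and V be closed subspaces of H with U ⊕ V = H (direct internal sum). Let W_{UV} be the (bounded) projection of H with range U and kernel V. If U ≠ {0} and V ≠ {0}, then ‖W_{UV}‖ = ‖I − W_{UV}‖ = sec(θ_{U,V⊥}). -/

import Mathlib

open Submodule

variable {H : Type*}

/-- The cosine of the subspace angle `θ_{U,W}` between subspaces `U` and `W`:
`cos θ_{U,W} = inf_{u ∈ U, ‖u‖ = 1} ‖Q_W u‖`. -/
noncomputable def cosAngle [NormedAddCommGroup H] [InnerProductSpace ℂ H]
    (U W : Submodule ℂ H) [HasOrthogonalProjection W] : ℝ :=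
  sInf {r : ℝ | ∃ u ∈ U, ‖u‖ = 1 ∧ r = ‖(orthogonalProjection W u : H)‖}

section Aux

variable [NormedAddCommGroup H] [InnerProductSpace ℂ H]

lemma cosAngle_le (U W : Submodule ℂ H) [HasOrthogonalProjection W]
    {u : H} (hu : u ∈ U) (hu1 : ‖u‖ = 1) :
    cosAngle U W ≤ ‖(orthogonalProjection W u : H)‖ := by
  apply csInf_le
  · exact ⟨0, by rintro r ⟨u, _, _, rfl⟩; exact norm_nonneg _⟩
  · exact ⟨u, hu, hu1, rfl⟩

lemma exists_unit (U : Submodule ℂ H) (hU0 : U ≠ ⊥) : ∃ u ∈ U, ‖u‖ = 1 := by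
  obtain ⟨u, hu, hu0⟩ := Submodule.exists_mem_ne_zero_of_ne_bot hU0
  exact ⟨(‖u‖⁻¹ : ℂ) • u, U.smul_mem _ hu, norm_smul_inv_norm hu0⟩

lemma le_cosAngle (U W : Submodule ℂ H) [HasOrthogonalProjection W]
    {c : ℝ} (hU0 : U ≠ ⊥)
    (h : ∀ u ∈ U, ‖u‖ = 1 → c ≤ ‖(orthogonalProjection W u : H)‖) :
    c ≤ cosAngle U W := by
  apply le_csInf
  · obtain ⟨u, hu, hu1⟩ := exists_unit U hU0
    exact ⟨_, u, hu, hu1, rfl⟩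
  · rintro r ⟨u, hu, hu1, rfl⟩; exact h u hu hu1

/-- If `z ∈ Kᗮ` then `‖P_K y‖ ≤ ‖y - z‖`. -/
lemma norm_orthProj_le_norm_sub (K : Submodule ℂ H) [HasOrthogonalProjection K]
    (y : H) {z : H} (hz : z ∈ Kᗮ) :
    ‖(orthogonalProjection K y : H)‖ ≤ ‖y - z‖ := by
  have h0 : orthogonalProjection K z = 0 :=
    orthogonalProjection_mem_subspace_orthogonalComplement_eq_zero hz
  have heq : (orthogonalProjection K (y - z) : H) = orthogonalProjection K y := by
    rw [map_sub, h0]; simp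
  calc ‖(orthogonalProjection K y : H)‖ = ‖(orthogonalProjection K (y - z) : H)‖ := by rw [heq]
    _ ≤ ‖orthogonalProjection K‖ * ‖y - z‖ := (orthogonalProjection K).le_opNorm (y - z)
    _ ≤ 1 * ‖y - z‖ :=
        mul_le_mul_of_nonneg_right (orthogonalProjection_norm_le K) (norm_nonneg _)
    _ = ‖y - z‖ := one_mul _

/-- Key lemma: the norm of an oblique projection with range `U` and kernel `V`. -/
lemma norm_proj_eq (U V : Submodule ℂ H) [HasOrthogonalProjection V] [HasOrthogonalProjection Vᗮ]
    (W : H →L[ℂ] H)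
    (hker : LinearMap.ker (W : H →ₗ[ℂ] H) = V) (hproj : ∀ u ∈ U, W u = u)
    (hWU : ∀ x, W x ∈ U) (hU0 : U ≠ ⊥) :
    ‖W‖ = (cosAngle U Vᗮ)⁻¹ := by
  set c := cosAngle U Vᗮ with hc
  obtain ⟨u₀, hu₀, hu₀1⟩ := exists_unit U hU0
  have hW0 : 0 < ‖W‖ := by
    rw [norm_pos_iff]
    intro h
    have h1 : W u₀ = u₀ := hproj u₀ hu₀
    rw [h] at h1
    simp at h1
    rw [← h1] at hu₀1
    norm_num at hu₀1
  have hc1 : ‖W‖⁻¹ ≤ c := by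
    apply le_cosAngle U Vᗮ hU0
    intro u hu hu1
    have hdec : (orthogonalProjection V u : H) + (orthogonalProjection Vᗮ u : H) = u :=
      V.starProjection_add_starProjection_orthogonal u
    have hWv : W (orthogonalProjection V u : H) = 0 := by
      have hm : (orthogonalProjection V u : H) ∈ LinearMap.ker (W : H →ₗ[ℂ] H) := by
        rw [hker]; exact (orthogonalProjection V u).2
      simpa using hm
    have hWp : W (orthogonalProjection Vᗮ u : H) = u := by
      have h2 := congrArg W hdec
      rw [map_add, hWv, zero_add] at h2
      rw [h2, hproj u hu]
    have h1 : (1 : ℝ) ≤ ‖W‖ * ‖(orthogonalProjection Vᗮ u : H)‖ := by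
      calc (1:ℝ) = ‖u‖ := hu1.symm
        _ = ‖W (orthogonalProjection Vᗮ u : H)‖ := by rw [hWp]
        _ ≤ ‖W‖ * ‖(orthogonalProjection Vᗮ u : H)‖ := W.le_opNorm _
    rw [inv_le_iff_one_le_mul₀ hW0]
    linarith
  have hcpos : 0 < c := lt_of_lt_of_le (inv_pos.mpr hW0) hc1
  have hc2 : ‖W‖ ≤ c⁻¹ := by
    apply W.opNorm_le_bound (by positivity)
    intro x
    by_cases h0 : W x = 0
    · rw [h0]; simp; positivity
    · set u := W x with hu
      have hn : 0 < ‖u‖ := norm_pos_iff.mpr h0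
      have huU : u ∈ U := hWU x
      have hmem : u - x ∈ Vᗮᗮ := by
        apply Submodule.le_orthogonal_orthogonal
        rw [← hker]
        simp only [LinearMap.mem_ker]
        show W (u - x) = 0
        rw [map_sub, ← hu, hproj u huU, sub_self]
      have hle : ‖(orthogonalProjection Vᗮ u : H)‖ ≤ ‖x‖ := by
        have h3 := norm_orthProj_le_norm_sub Vᗮ u hmem
        simpa using h3
      have hcu : c ≤ ‖u‖⁻¹ * ‖x‖ := by
        calc c ≤ ‖(orthogonalProjection Vᗮ ((‖u‖⁻¹ : ℂ) • u) : H)‖ :=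
              cosAngle_le U Vᗮ (U.smul_mem _ huU) (norm_smul_inv_norm h0)
          _ = ‖u‖⁻¹ * ‖(orthogonalProjection Vᗮ u : H)‖ := by
              rw [map_smul]
              show ‖(‖u‖⁻¹ : ℂ) • (orthogonalProjection Vᗮ u : H)‖ = _
              rw [norm_smul]
              simp
          _ ≤ ‖u‖⁻¹ * ‖x‖ := mul_le_mul_of_nonneg_left hle (by positivity)
      have h6 : c * ‖u‖ ≤ (‖u‖⁻¹ * ‖x‖) * ‖u‖ := mul_le_mul_of_nonneg_right hcu hn.le
      have h7 : (‖u‖⁻¹ * ‖x‖) * ‖u‖ = ‖x‖ := by field_simp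
      show ‖u‖ ≤ c⁻¹ * ‖x‖
      rw [inv_mul_eq_div, le_div_iff₀ hcpos]
      calc ‖u‖ * c = c * ‖u‖ := mul_comm _ _
        _ ≤ ‖x‖ := h7 ▸ h6
  refine le_antisymm hc2 ?_
  rw [inv_le_iff_one_le_mul₀ hcpos]
  rw [inv_le_iff_one_le_mul₀ hW0] at hc1
  nlinarith
/-- Symmetry (one direction): `cos θ_{V,Uᗮ} ≤ cos θ_{U,Vᗮ}`. -/
lemma cosAngle_symm_le (U V : Submodule ℂ H)
    [HasOrthogonalProjection U] [HasOrthogonalProjection V]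
    [HasOrthogonalProjection Uᗮ] [HasOrthogonalProjection Vᗮ]
    (hU0 : U ≠ ⊥) (hV0 : V ≠ ⊥) :
    cosAngle V Uᗮ ≤ cosAngle U Vᗮ := by
  apply le_cosAngle U Vᗮ hU0
  intro u hu hu1
  set p := (orthogonalProjection V u : H) with hp
  have hpyth : ‖u‖ ^ 2 = ‖p‖ ^ 2 + ‖(orthogonalProjection Vᗮ u : H)‖ ^ 2 := by
    exact norm_sq_eq_add_norm_sq_projection u V
  by_cases h0 : p = 0
  · have h1 : ‖(orthogonalProjection Vᗮ u : H)‖ = 1 := by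
      rw [h0, hu1, norm_zero] at hpyth
      apply le_antisymm <;> nlinarith [norm_nonneg (orthogonalProjection Vᗮ u : H)]
    rw [h1]
    obtain ⟨v, hv, hv1⟩ := exists_unit V hV0
    calc cosAngle V Uᗮ ≤ ‖(orthogonalProjection Uᗮ v : H)‖ := cosAngle_le V Uᗮ hv hv1
      _ ≤ ‖v - 0‖ := norm_orthProj_le_norm_sub Uᗮ v (Submodule.zero_mem _)
      _ = 1 := by simpa using hv1
  · set v : H := (‖p‖⁻¹ : ℂ) • p with hv
    have hpn : 0 < ‖p‖ := norm_pos_iff.mpr h0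
    have hvV : v ∈ V := V.smul_mem _ (orthogonalProjection V u).2
    have hv1 : ‖v‖ = 1 := norm_smul_inv_norm h0
    have hinner : (inner ℂ u p : ℂ) = (‖p‖ : ℂ) ^ 2 := by
      have hdec : p + (orthogonalProjection Vᗮ u : H) = u :=
        V.starProjection_add_starProjection_orthogonal u
      have horth : (inner ℂ (orthogonalProjection Vᗮ u : H) p : ℂ) = 0 :=
        (Submodule.mem_orthogonal' V _).mp (orthogonalProjection Vᗮ u).2 p
          (orthogonalProjection V u).2
      calc (inner ℂ u p : ℂ) = inner ℂ (p + (orthogonalProjection Vᗮ u : H)) p := by rw [hdec]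
        _ = (inner ℂ p p : ℂ) + inner ℂ (orthogonalProjection Vᗮ u : H) p := inner_add_left _ _ _
        _ = (‖p‖ : ℂ) ^ 2 := by
            rw [horth, add_zero, inner_self_eq_norm_sq_to_K]
            rfl
    -- inner ℂ v u = ‖p‖
    have hivu : (inner ℂ v u : ℂ) = (‖p‖ : ℂ) := by
      have h1 : (inner ℂ u v : ℂ) = (‖p‖ : ℂ) := by
        have hne : (‖p‖ : ℂ) ≠ 0 := by exact_mod_cast hpn.ne'
        rw [hv, inner_smul_right, hinner]
        push_cast
        rw [sq, inv_mul_cancel_left₀ hne]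
      calc (inner ℂ v u : ℂ) = starRingEnd ℂ (inner ℂ u v : ℂ) := (inner_conj_symm _ _).symm
        _ = starRingEnd ℂ ((‖p‖ : ℂ)) := by rw [h1]
        _ = (‖p‖ : ℂ) := Complex.conj_ofReal _
    have hkey : ‖v - (‖p‖ : ℂ) • u‖ ^ 2 = 1 - ‖p‖ ^ 2 := by
      have hre : Complex.re (inner ℂ v ((‖p‖ : ℂ) • u) : ℂ) = ‖p‖ ^ 2 := by
        rw [inner_smul_right, hivu]
        push_cast
        ring_nf
        simp [sq]
      have hns := norm_sub_sq (𝕜 := ℂ) v ((‖p‖ : ℂ) • u)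
      rw [hns]
      have hnsm : ‖(‖p‖ : ℂ) • u‖ = ‖p‖ := by
        rw [norm_smul, hu1]
        simp
      rw [hnsm, hv1]
      simp only [RCLike.re_to_complex] at hre ⊢
      rw [hre]
      ring
    have hmem : (‖p‖ : ℂ) • u ∈ Uᗮᗮ :=
      Submodule.smul_mem _ _ (Submodule.le_orthogonal_orthogonal U hu)
    have hA : cosAngle V Uᗮ ≤ ‖v - (‖p‖ : ℂ) • u‖ :=
      (cosAngle_le V Uᗮ hvV hv1).trans (norm_orthProj_le_norm_sub Uᗮ v hmem)
    have hB : ‖v - (‖p‖ : ℂ) • u‖ ^ 2 = ‖(orthogonalProjection Vᗮ u : H)‖ ^ 2 := by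
      rw [hkey]
      rw [hu1] at hpyth
      nlinarith
    have hC : ‖v - (‖p‖ : ℂ) • u‖ = ‖(orthogonalProjection Vᗮ u : H)‖ := by
      nlinarith [norm_nonneg (v - (‖p‖ : ℂ) • u),
        norm_nonneg (orthogonalProjection Vᗮ u : H),
        sq_nonneg (‖v - (‖p‖ : ℂ) • u‖ - ‖(orthogonalProjection Vᗮ u : H)‖)]
    rw [← hC]
    exact hA

end Aux

/-- if `H = U ⊕ V` with `U, V` closed and nontrivial, and `W` is the bounded
projection with range `U` and kernel `V`, then `‖W‖ = ‖I - W‖ = sec θ_{U,Vᗮ}`. -/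
theorem stmt1 [NormedAddCommGroup H] [InnerProductSpace ℂ H] [CompleteSpace H]
    (U V : Submodule ℂ H) (hU : IsClosed (U : Set H)) (hV : IsClosed (V : Set H))
    [HasOrthogonalProjection Vᗮ]
    (hcompl : IsCompl U V)
    (W : H →L[ℂ] H)
    (hrange : LinearMap.range (W : H →ₗ[ℂ] H) = U) (hker : LinearMap.ker (W : H →ₗ[ℂ] H) = V)
    (hproj : ∀ u ∈ U, W u = u)
    (hU0 : U ≠ ⊥) (hV0 : V ≠ ⊥) :
    ‖W‖ = (cosAngle U Vᗮ)⁻¹ ∧ ‖ContinuousLinearMap.id ℂ H - W‖ = (cosAngle U Vᗮ)⁻¹ := by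
  haveI : CompleteSpace U := hU.completeSpace_coe
  haveI : CompleteSpace V := hV.completeSpace_coe
  have hWU : ∀ x, W x ∈ U := fun x => hrange ▸ LinearMap.mem_range_self (W : H →ₗ[ℂ] H) x
  have h1 : ‖W‖ = (cosAngle U Vᗮ)⁻¹ := norm_proj_eq U V W hker hproj hWU hU0
  set W' := ContinuousLinearMap.id ℂ H - W with hW'
  have hW'app : ∀ x, W' x = x - W x := fun x => rfl
  have hkerV : ∀ v ∈ V, W v = 0 := by
    intro v hv
    have : v ∈ LinearMap.ker (W : H →ₗ[ℂ] H) := hker ▸ hv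
    simpa using this
  have hker' : LinearMap.ker (W' : H →ₗ[ℂ] H) = U := by
    ext x
    simp only [LinearMap.mem_ker]
    constructor
    · intro h
      have h2 : x - W x = 0 := by rw [← hW'app x]; exact h
      have hx : x = W x := by rwa [sub_eq_zero] at h2
      rw [hx]; exact hWU x
    · intro h
      show W' x = 0
      rw [hW'app, hproj x h, sub_self]
  have hproj' : ∀ v ∈ V, W' v = v := by
    intro v hv
    rw [hW'app, hkerV v hv, sub_zero]
  have hWV' : ∀ x, W' x ∈ V := by
    intro x
    have : W (x - W x) = 0 := by
      rw [map_sub, hproj _ (hWU x), sub_self]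
    have hm : x - W x ∈ LinearMap.ker (W : H →ₗ[ℂ] H) := this
    rw [hker] at hm
    exact hW'app x ▸ hm
  have h2 : ‖W'‖ = (cosAngle V Uᗮ)⁻¹ := norm_proj_eq V U W' hker' hproj' hWV' hV0
  have hsym : cosAngle V Uᗮ = cosAngle U Vᗮ :=
    le_antisymm (cosAngle_symm_le U V hU0 hV0) (cosAngle_symm_le V U hV0 hU0)
  exact ⟨h1, by rw [h2, hsym]⟩
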